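/- Let R be the compact topological ring (ℤ/2ℤ)^ℕ with pointwise operations and the product topology, R̃ ⊆ R the subring of finitely supported sequences, and G = (R × R) ⋊ R the generalized Heisenberg group defined via the action π(f, (a, x)) = (a + f·x, x). Let B = {((0, x), 0) : x ∈ R̃} ≤ G. Then B is a Boolean subgroup of G which is not closed, its closure in G equals {((0, x), 0) : x ∈ R}, and this closure intersects the center Z(G) = {((a, 0), 0) : a ∈ R} trivially. -/

import Mathlib

/-- The compact ring `R = (ℤ/2ℤ)^ℕ` with pointwise operations and the product topology. -/
abbrev RH : Type := ℕ → ZMod 2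

/-- The carrier of the generalized Heisenberg group `G = (R × R) ⋊ R`. -/
def Heis : Type := (RH × RH) × RH

/-- The multiplication of the generalized Heisenberg group, corresponding to the action
`π(f, (a, x)) = (a + f·x, x)`:
`((a₁, x₁), f₁) · ((a₂, x₂), f₂) = ((a₁ + a₂ + f₁·x₂, x₁ + x₂), f₁ + f₂)`. -/
def heisMul (p q : Heis) : Heis :=
  ((p.1.1 + q.1.1 + p.2 * q.1.2, p.1.2 + q.1.2), p.2 + q.2)

def heisInv (p : Heis) : Heis :=
  ((-p.1.1 + p.2 * p.1.2, -p.1.2), -p.2)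

instance : Group Heis where
  mul := heisMul
  one := ((0, 0), 0)
  inv := heisInv
  mul_assoc p q r := by
    show heisMul (heisMul p q) r = heisMul p (heisMul q r)
    simp only [heisMul]
    exact Prod.ext (Prod.ext (by ring) (by ring)) (by ring)
  one_mul p := by
    show heisMul ((0, 0), 0) p = p
    simp only [heisMul]
    exact Prod.ext (Prod.ext (by ring) (by ring)) (by ring)
  mul_one p := by
    show heisMul p ((0, 0), 0) = p
    simp only [heisMul]
    exact Prod.ext (Prod.ext (by ring) (by ring)) (by ring)
  inv_mul_cancel p := by
    show heisMul (heisInv p) p = ((0, 0), 0)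
    simp only [heisMul, heisInv]
    exact Prod.ext (Prod.ext (by ring) (by ring)) (by ring)

instance : TopologicalSpace Heis := inferInstanceAs (TopologicalSpace ((RH × RH) × RH))
instance : CompactSpace Heis := inferInstanceAs (CompactSpace ((RH × RH) × RH))
instance : T2Space Heis := inferInstanceAs (T2Space ((RH × RH) × RH))

instance : IsTopologicalGroup Heis where
  continuous_mul := by
    show Continuous fun p : Heis × Heis => heisMul p.1 p.2
    unfold heisMul
    fun_prop
  continuous_inv := by
    show Continuous fun p : Heis => heisInv p
    unfold heisInv
    fun_prop

/-- The subgroup `B = {((0, x), 0) : x ∈ R̃} ≤ G`, where `R̃ ⊆ R` is the subring of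
finitely supported sequences. -/
def heisB : Subgroup Heis where
  carrier := {p : Heis | p.1.1 = 0 ∧ (Function.support p.1.2).Finite ∧ p.2 = 0}
  one_mem' := by
    refine ⟨rfl, ?_, rfl⟩
    show (Function.support (0 : RH)).Finite
    simp
  mul_mem' := by
    rintro p q ⟨ha1, ha2, ha3⟩ ⟨hb1, hb2, hb3⟩
    refine ⟨?_, ?_, ?_⟩
    · show p.1.1 + q.1.1 + p.2 * q.1.2 = 0
      rw [ha1, hb1, ha3]; ring
    · show (Function.support (p.1.2 + q.1.2)).Finite
      exact (ha2.union hb2).subset (Function.support_add _ _)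
    · show p.2 + q.2 = 0
      rw [ha3, hb3]; ring
  inv_mem' := by
    rintro p ⟨ha1, ha2, ha3⟩
    refine ⟨?_, ?_, ?_⟩
    · show -p.1.1 + p.2 * p.1.2 = 0
      rw [ha1, ha3]; ring
    · show (Function.support (-p.1.2)).Finite
      rwa [Function.support_neg]
    · show -p.2 = 0
      rw [ha3]; ring

/-- In the generalized Heisenberg group `G = (R × R) ⋊ R` over
`R = (ℤ/2ℤ)^ℕ`, the subgroup `B = {((0, x), 0) : x ∈ R̃}` is Boolean and not closed, its
closure is `{((0, x), 0) : x ∈ R}`, the center of `G` is `Z(G) = {((a, 0), 0) : a ∈ R}`,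
and the closure of `B` intersects `Z(G)` trivially. -/
lemma heis_mul_def (p q : Heis) :
    p * q = ((p.1.1 + q.1.1 + p.2 * q.1.2, p.1.2 + q.1.2), p.2 + q.2) := rfl

lemma heis_one_def : (1 : Heis) = ((0, 0), 0) := rfl

lemma heis_closure_B :
    closure (heisB : Set Heis) = {p : Heis | p.1.1 = 0 ∧ p.2 = 0} := by
  apply le_antisymm
  · apply closure_minimal
    · rintro p ⟨h1, _, h3⟩; exact ⟨h1, h3⟩
    · have : {p : Heis | p.1.1 = 0 ∧ p.2 = 0} =
          (fun p : Heis => p.1.1) ⁻¹' {0} ∩ (fun p : Heis => p.2) ⁻¹' {0} := by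
        ext p; simp [Set.mem_setOf_eq]
      rw [this]
      exact (isClosed_singleton.preimage (by fun_prop)).inter
        (isClosed_singleton.preimage (by fun_prop))
  · rintro p ⟨h1, h3⟩
    have hp : p = ((0, p.1.2), 0) := Prod.ext (Prod.ext h1 rfl) h3
    rw [hp]
    have : Filter.Tendsto
        (fun n : ℕ => (((0 : RH), fun i => if i < n then p.1.2 i else 0), (0 : RH)) : ℕ → Heis)
        Filter.atTop (nhds ((0, p.1.2), 0)) := by
      refine Filter.Tendsto.prodMk_nhds (Filter.Tendsto.prodMk_nhds tendsto_const_nhds ?_)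
        tendsto_const_nhds
      rw [tendsto_pi_nhds]
      intro i
      apply tendsto_nhds_of_eventually_eq
      filter_upwards [Filter.eventually_gt_atTop i] with n hn
      simp [hn]
    refine mem_closure_of_tendsto this (Filter.Eventually.of_forall fun n => ?_)
    refine ⟨rfl, ?_, rfl⟩
    show (Function.support fun i => if i < n then p.1.2 i else 0).Finite
    apply Set.Finite.subset (Set.finite_Iio n)
    intro i hi
    simp only [Function.mem_support] at hi
    rw [Set.mem_Iio]
    by_contra hc
    rw [if_neg hc] at hi
    exact hi rfl

theorem heisenberg_boolean_subgroup_properties :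
    (∀ b ∈ heisB, b * b = 1) ∧
    ¬ IsClosed (heisB : Set Heis) ∧
    closure (heisB : Set Heis) = {p : Heis | p.1.1 = 0 ∧ p.2 = 0} ∧
    (Subgroup.center Heis : Set Heis) = {p : Heis | p.1.2 = 0 ∧ p.2 = 0} ∧
    (∀ p ∈ closure (heisB : Set Heis), p ∈ Subgroup.center Heis → p = 1) := by
  have hcenter : (Subgroup.center Heis : Set Heis) = {p : Heis | p.1.2 = 0 ∧ p.2 = 0} := by
    ext p
    simp only [SetLike.mem_coe, Subgroup.mem_center_iff, Set.mem_setOf_eq]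
    constructor
    · intro h
      have h1 := congrArg (fun r : Heis => r.2) (h ((0, 0), 1))
      have h2 := congrArg (fun r : Heis => r.1.1) (h ((0, 1), 0))
      erw [heis_mul_def, heis_mul_def] at h1 h2
      constructor
      · have h3 := congrArg (fun r : Heis => r.1.1) (h ((0, 0), 1))
        erw [heis_mul_def, heis_mul_def] at h3
        funext i
        have := congrFun h3 i
        simpa using this
      · funext i
        have := congrFun h2 i
        simpa using this
    · rintro ⟨h1, h2⟩ q
      simp only [heis_mul_def, h1, h2]
      refine Prod.ext (Prod.ext ?_ ?_) ?_ <;> simp <;> ring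
  refine ⟨?_, ?_, heis_closure_B, hcenter, ?_⟩
  · rintro b ⟨h1, _, h3⟩
    simp only [heis_mul_def, heis_one_def, h1, h3]
    have hx : b.1.2 + b.1.2 = 0 := by
      funext i
      show b.1.2 i + b.1.2 i = 0
      have h2 : (2 : ZMod 2) = 0 := rfl
      calc b.1.2 i + b.1.2 i = 2 * b.1.2 i := by ring
        _ = 0 := by rw [h2]; ring
    exact Prod.ext (Prod.ext (by simp) hx) (by simp)
  · intro hcl
    have h := hcl.closure_eq
    rw [heis_closure_B] at h
    have : (((0 : RH), (1 : RH)), (0 : RH)) ∈ (heisB : Set Heis) := by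
      rw [← h]; exact ⟨rfl, rfl⟩
    obtain ⟨-, hfin, -⟩ := this
    have : Function.support ((1 : RH)) = Set.univ := by
      ext i; simp [Function.mem_support]
    rw [this] at hfin
    exact Set.infinite_univ hfin
  · intro p hp hpc
    rw [heis_closure_B] at hp
    rw [← SetLike.mem_coe, hcenter] at hpc
    have : p = ((p.1.1, p.1.2), p.2) := rfl
    rw [heis_one_def, this, hp.1, hp.2, hpc.1]
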